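/- For every n ≥ 1, D(P_n, -1) equals 1 if n ≡ 0 or 3 (mod 4), and equals -1 if n ≡ 1 or 2 (mod 4). -/

import Mathlib

open SimpleGraph Polynomial Finset

open Classical in
/-- The number of dominating sets of `G` of cardinality `i`. -/
noncomputable def domCount {V : Type*} [Fintype V] [DecidableEq V]
    (G : SimpleGraph V) (i : ℕ) : ℕ :=
  (Finset.univ.filter fun S : Finset V =>
    S.card = i ∧ ∀ v : V, v ∈ S ∨ ∃ u ∈ S, G.Adj u v).card

/-- The domination polynomial of `G`. -/
noncomputable def domPoly {V : Type*} [Fintype V] [DecidableEq V]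
    (G : SimpleGraph V) : Polynomial ℤ :=
  ∑ i ∈ Finset.range (Fintype.card V + 1), Polynomial.C (domCount G i : ℤ) * Polynomial.X ^ i

/-- The domination number of `G`. -/
noncomputable def domNum {V : Type*} [Fintype V] [DecidableEq V] (G : SimpleGraph V) : ℕ :=
  sInf {i | ∃ S : Finset V, S.card = i ∧ ∀ v : V, v ∈ S ∨ ∃ u ∈ S, G.Adj u v}


/-- vertex `i` is dominated by set `S` in the path (neighbors `i-1`, `i+1`, or itself). -/
def domA (S : Finset ℕ) (i : ℕ) : Prop := i ∈ S ∨ i + 1 ∈ S ∨ (0 < i ∧ i - 1 ∈ S)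

instance (S : Finset ℕ) (i : ℕ) : Decidable (domA S i) := by unfold domA; infer_instance

/-- all vertices `< n` dominated. -/
def PP (n : ℕ) (S : Finset ℕ) : Prop := ∀ i, i < n → domA S i

/-- all vertices except possibly the last dominated. -/
def QQ (n : ℕ) (S : Finset ℕ) : Prop := ∀ i, i + 1 < n → domA S i

instance (n : ℕ) (S : Finset ℕ) : Decidable (PP n S) := by unfold PP; infer_instance
instance (n : ℕ) (S : Finset ℕ) : Decidable (QQ n S) :=
  decidable_of_iff (∀ i < n, i + 1 < n → domA S i)
    ⟨fun h i hi => h i (by omega) hi, fun h i _ hi2 => h i hi2⟩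

noncomputable def pS (n : ℕ) : ℤ :=
  ∑ S ∈ (range n).powerset, if PP n S then (-1 : ℤ) ^ S.card else 0
noncomputable def qS (n : ℕ) : ℤ :=
  ∑ S ∈ (range n).powerset, if QQ n S then (-1 : ℤ) ^ S.card else 0
noncomputable def rS (n : ℕ) : ℤ :=
  ∑ S ∈ (range n).powerset, if n - 1 ∈ S ∧ PP n S then (-1 : ℤ) ^ S.card else 0

lemma domA_insert_top {n : ℕ} {S : Finset ℕ} (hS : S ⊆ range n) {i : ℕ} (hi : i + 1 < n) :
    domA (insert n S) i ↔ domA S i := by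
  have h1 : i ≠ n := by omega
  have h2 : i + 1 ≠ n := by omega
  have h3 : i - 1 ≠ n := by omega
  simp [domA, Finset.mem_insert, h1, h2, h3]

lemma not_mem_top {n : ℕ} {S : Finset ℕ} (hS : S ⊆ range n) : n ∉ S := by
  intro h; have := hS h; simp at this

lemma PP_insert_top {n : ℕ} {S : Finset ℕ} (hS : S ⊆ range n) :
    PP (n + 1) (insert n S) ↔ QQ n S := by
  constructor
  · intro h i hi
    have := h i (by omega)
    rwa [domA_insert_top hS (by omega)] at this
  · intro h i hi
    rcases Nat.lt_or_ge i n with hin | hin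
    · rcases Nat.lt_or_ge (i + 1) n with hin2 | hin2
      · rw [domA_insert_top hS (by omega)]; exact h i hin2
      · right; left
        have : i + 1 = n := by omega
        simp [this]
    · have : i = n := by omega
      subst this
      left; simp

lemma PP_no_top {n : ℕ} {S : Finset ℕ} (hS : S ⊆ range n) :
    PP (n + 1) S ↔ (n - 1 ∈ S ∧ PP n S) := by
  have hn1 : n + 1 ∉ S := fun h' => by
    have := hS h'; rw [Finset.mem_range] at this; omega
  constructor
  · intro h
    refine ⟨?_, fun i hi => h i (by omega)⟩
    have := h n (by omega)
    rcases this with h' | h' | h'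
    · exact absurd h' (not_mem_top hS)
    · exact absurd h' hn1
    · exact h'.2
  · rintro ⟨h1, h2⟩ i hi
    rcases Nat.lt_or_ge i n with hin | hin
    · exact h2 i hin
    · have hin' : i = n := by omega
      have hn : 0 < n := by
        by_contra hc
        have hn0 : n = 0 := by omega
        subst hn0
        exact not_mem_top hS (by simpa using h1)
      exact hin' ▸ Or.inr (Or.inr ⟨hn, h1⟩)

lemma QQ_insert_top {n : ℕ} {S : Finset ℕ} (hS : S ⊆ range n) :
    QQ (n + 1) (insert n S) ↔ QQ n S := by
  constructor
  · intro h i hi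
    have := h i (by omega)
    rwa [domA_insert_top hS hi] at this
  · intro h i hi
    rcases Nat.lt_or_ge (i + 1) n with hin | hin
    · rw [domA_insert_top hS hin]; exact h i hin
    · have : i + 1 = n := by omega
      right; left; simp [this]

lemma QQ_no_top {n : ℕ} {S : Finset ℕ} :
    QQ (n + 1) S ↔ PP n S :=
  ⟨fun h i hi => h i (by omega), fun h i hi => h i (by omega)⟩

lemma card_insert_top {n : ℕ} {S : Finset ℕ} (hS : S ⊆ range n) :
    (insert n S).card = S.card + 1 := Finset.card_insert_of_notMem (not_mem_top hS)

lemma sum_PP_insert (n : ℕ) :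
    (∑ S ∈ (range n).powerset, if PP (n + 1) (insert n S) then (-1 : ℤ) ^ (insert n S).card else 0)
      = -qS n := by
  unfold qS
  rw [← Finset.sum_neg_distrib]
  refine Finset.sum_congr rfl fun S hS => ?_
  rw [mem_powerset] at hS
  simp only [PP_insert_top hS, card_insert_top hS]
  by_cases h : QQ n S <;> simp [h, pow_succ]

lemma sum_PP_no (n : ℕ) :
    (∑ S ∈ (range n).powerset, if PP (n + 1) S then (-1 : ℤ) ^ S.card else 0) = rS n := by
  unfold rS
  refine Finset.sum_congr rfl fun S hS => ?_
  rw [mem_powerset] at hS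
  simp only [PP_no_top hS]

lemma sum_QQ_insert (n : ℕ) :
    (∑ S ∈ (range n).powerset, if QQ (n + 1) (insert n S) then (-1 : ℤ) ^ (insert n S).card else 0)
      = -qS n := by
  unfold qS
  rw [← Finset.sum_neg_distrib]
  refine Finset.sum_congr rfl fun S hS => ?_
  rw [mem_powerset] at hS
  simp only [QQ_insert_top hS, card_insert_top hS]
  by_cases h : QQ n S <;> simp [h, pow_succ]

lemma sum_QQ_no (n : ℕ) :
    (∑ S ∈ (range n).powerset, if QQ (n + 1) S then (-1 : ℤ) ^ S.card else 0) = pS n := by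
  unfold pS
  refine Finset.sum_congr rfl fun S hS => ?_
  simp only [QQ_no_top]

lemma sum_RR_insert (n : ℕ) :
    (∑ S ∈ (range n).powerset,
        if n + 1 - 1 ∈ insert n S ∧ PP (n + 1) (insert n S) then (-1 : ℤ) ^ (insert n S).card else 0)
      = -qS n := by
  unfold qS
  rw [← Finset.sum_neg_distrib]
  refine Finset.sum_congr rfl fun S hS => ?_
  rw [mem_powerset] at hS
  simp only [PP_insert_top hS, card_insert_top hS]
  simp only [Nat.add_sub_cancel, Finset.mem_insert_self, true_and]
  by_cases h : QQ n S <;> simp [h, pow_succ]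

lemma sum_RR_no (n : ℕ) :
    (∑ S ∈ (range n).powerset, if n + 1 - 1 ∈ S ∧ PP (n + 1) S then (-1 : ℤ) ^ S.card else 0)
      = 0 := by
  refine Finset.sum_eq_zero fun S hS => ?_
  rw [mem_powerset] at hS
  have : n ∉ S := not_mem_top hS
  simp [this]

lemma pS_succ (n : ℕ) : pS (n + 1) = -qS n + rS n := by
  unfold pS
  rw [range_add_one, Finset.sum_powerset_insert (by simp), sum_PP_no, sum_PP_insert]
  ring

lemma qS_succ (n : ℕ) : qS (n + 1) = pS n - qS n := by
  conv_lhs => rw [qS]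
  rw [range_add_one, Finset.sum_powerset_insert (by simp), sum_QQ_no, sum_QQ_insert]
  ring

lemma rS_succ (n : ℕ) : rS (n + 1) = -qS n := by
  unfold rS
  rw [range_add_one, Finset.sum_powerset_insert (by simp), sum_RR_no, sum_RR_insert]
  ring

lemma pS_zero : pS 0 = 1 := by simp [pS, PP]
lemma qS_zero : qS 0 = 1 := by simp [qS, QQ]
lemma rS_zero : rS 0 = 0 := by simp [rS]

lemma pqr_values (n : ℕ) :
    pS n = (if n % 4 = 0 ∨ n % 4 = 3 then 1 else -1) ∧
    qS n = (if n % 4 = 0 then 1 else if n % 4 = 2 then -1 else 0) ∧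
    rS n = (if n % 4 = 1 then -1 else if n % 4 = 3 then 1 else 0) := by
  induction n with
  | zero => simp [pS_zero, qS_zero, rS_zero]
  | succ n ih =>
    obtain ⟨hp, hq, hr⟩ := ih
    rw [pS_succ, qS_succ, rS_succ, hp, hq, hr]
    have h4 : n % 4 = 0 ∨ n % 4 = 1 ∨ n % 4 = 2 ∨ n % 4 = 3 := by omega
    rcases h4 with h | h | h | h <;>
      · have h' : (n + 1) % 4 = (n % 4 + 1) % 4 := by omega
        rw [h'] ; rw [h] ; norm_num


open Classical in
lemma domPoly_eval_neg_one {V : Type*} [Fintype V] [DecidableEq V] (G : SimpleGraph V) :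
    (domPoly G).eval (-1) =
      ∑ S ∈ Finset.univ.filter (fun S : Finset V => ∀ v, v ∈ S ∨ ∃ u ∈ S, G.Adj u v),
        (-1 : ℤ) ^ S.card := by
  rw [domPoly, eval_finset_sum]
  simp only [eval_mul, eval_C, eval_pow, eval_X]
  rw [← Finset.sum_fiberwise_of_maps_to
      (g := Finset.card) (t := range (Fintype.card V + 1))
      (fun S _ => by simp [Nat.lt_succ_iff, Finset.card_le_univ S])
      (fun S => (-1 : ℤ) ^ S.card)]
  refine Finset.sum_congr rfl fun j hj => ?_
  rw [Finset.filter_filter]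
  have hcard : (Finset.univ.filter fun S : Finset V =>
      (∀ v, v ∈ S ∨ ∃ u ∈ S, G.Adj u v) ∧ S.card = j).card = domCount G j := by
    rw [domCount]
    congr 1
    apply Finset.filter_congr
    intro S _
    tauto
  symm
  calc (∑ S ∈ Finset.univ.filter fun S : Finset V =>
          (∀ v, v ∈ S ∨ ∃ u ∈ S, G.Adj u v) ∧ S.card = j, (-1 : ℤ) ^ S.card)
      = ∑ S ∈ Finset.univ.filter fun S : Finset V =>
          (∀ v, v ∈ S ∨ ∃ u ∈ S, G.Adj u v) ∧ S.card = j, (-1 : ℤ) ^ j := by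
        refine Finset.sum_congr rfl fun S hS => ?_
        rw [Finset.mem_filter] at hS
        rw [hS.2.2]
    _ = (domCount G j : ℤ) * (-1) ^ j := by
        rw [Finset.sum_const, ← hcard, nsmul_eq_mul]


lemma dom_iff_PP {n : ℕ} (S : Finset (Fin n)) :
    (∀ v : Fin n, v ∈ S ∨ ∃ u ∈ S, (pathGraph n).Adj u v) ↔ PP n (S.image Fin.val) := by
  constructor
  · intro h i hi
    rcases h ⟨i, hi⟩ with hv | ⟨u, hu, hadj⟩
    · exact Or.inl (Finset.mem_image.mpr ⟨_, hv, rfl⟩)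
    · rw [pathGraph_adj] at hadj
      simp only [show ((⟨i, hi⟩ : Fin n) : ℕ) = i from rfl] at hadj
      rcases hadj with h1 | h1
    -- h1 : u.val + 1 = i  or  i + 1 = u.val
      · refine Or.inr (Or.inr ⟨by omega, Finset.mem_image.mpr ⟨u, hu, by omega⟩⟩)
      · exact Or.inr (Or.inl (Finset.mem_image.mpr ⟨u, hu, h1.symm⟩))
  · intro h v
    rcases h v.val v.isLt with hv | hv | ⟨hpos, hv⟩
    · obtain ⟨u, hu, hval⟩ := Finset.mem_image.mp hv
      exact Or.inl (by rwa [Fin.ext hval] at hu)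
    · obtain ⟨u, hu, hval⟩ := Finset.mem_image.mp hv
      exact Or.inr ⟨u, hu, pathGraph_adj.mpr (Or.inr hval.symm)⟩
    · obtain ⟨u, hu, hval⟩ := Finset.mem_image.mp hv
      exact Or.inr ⟨u, hu, pathGraph_adj.mpr (Or.inl (by omega))⟩

open Classical in
lemma filter_sum_eq_pS (n : ℕ) :
    (∑ S ∈ Finset.univ.filter
        (fun S : Finset (Fin n) => ∀ v, v ∈ S ∨ ∃ u ∈ S, (pathGraph n).Adj u v),
      (-1 : ℤ) ^ S.card) = pS n := by
  rw [pS, ← Finset.sum_filter]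
  refine Finset.sum_nbij' (i := fun S => S.image Fin.val)
    (j := fun T => Finset.univ.filter fun v : Fin n => (v : ℕ) ∈ T) ?_ ?_ ?_ ?_ ?_
  · intro S hS
    rw [Finset.mem_filter] at hS ⊢
    refine ⟨Finset.mem_powerset.mpr ?_, (dom_iff_PP S).mp hS.2⟩
    intro m hm
    obtain ⟨u, _, hval⟩ := Finset.mem_image.mp hm
    simpa [← hval] using u.isLt
  · intro T hT
    rw [Finset.mem_filter] at hT ⊢
    refine ⟨Finset.mem_univ _, ?_⟩
    rw [dom_iff_PP]
    have himg : (Finset.univ.filter fun v : Fin n => (v : ℕ) ∈ T).image Fin.val = T := by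
      ext m
      simp only [Finset.mem_image, Finset.mem_filter, Finset.mem_univ, true_and]
      constructor
      · rintro ⟨u, hu, rfl⟩; exact hu
      · intro hm
        have : m < n := Finset.mem_range.mp (Finset.mem_powerset.mp hT.1 hm)
        exact ⟨⟨m, this⟩, hm, rfl⟩
    rw [himg]
    exact hT.2
  · intro S _
    ext v
    simp [Finset.mem_image, Fin.val_injective.eq_iff]
  · intro T hT
    rw [Finset.mem_filter] at hT
    ext m
    simp only [Finset.mem_image, Finset.mem_filter, Finset.mem_univ, true_and]
    constructor
    · rintro ⟨u, hu, rfl⟩; exact hu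
    · intro hm
      have : m < n := Finset.mem_range.mp (Finset.mem_powerset.mp hT.1 hm)
      exact ⟨⟨m, this⟩, hm, rfl⟩
  · intro S _
    rw [Finset.card_image_of_injective _ Fin.val_injective]


theorem domPoly_path_neg_one (n : ℕ) (hn : 1 ≤ n) :
    (domPoly (pathGraph n)).eval (-1) =
      if n % 4 = 0 ∨ n % 4 = 3 then 1 else -1 := by
  rw [domPoly_eval_neg_one]
  have h := filter_sum_eq_pS n
  rw [← (pqr_values n).1, ← h]
  congr!
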